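/- Let a : ℤ_{≥1} → ℤ. In ℚ⟦q,t⟧ the infinite product ∏_{m≥1} ∏_{j≥1} (1 − (−q)^j t^m)^{j·a(m)} converges (for each total degree only finitely many factors differ from 1 in that degree, and negative exponents denote inverses of the unit power series 1 − (−q)^j t^m), and it equals exp( Σ_{n≥1} Σ_{m≥1} ( Σ_{k ≥ 1, k ∣ gcd(n,m)} ((−1)^{n−1} n / k²) · a(m/k) ) q^n t^m ), where exp denotes the formal exponential of a power series with zero constant term. -/

import Mathlib

noncomputable section

open MvPowerSeries

/-- In `ℚ⟦q,t⟧ = MvPowerSeries (Fin 2) ℚ`, the variable `q`. -/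
def q2 : MvPowerSeries (Fin 2) ℚ := MvPowerSeries.X 0

/-- In `ℚ⟦q,t⟧ = MvPowerSeries (Fin 2) ℚ`, the variable `t`. -/
def t2 : MvPowerSeries (Fin 2) ℚ := MvPowerSeries.X 1

/-- `1 - (-q)^j t^m` (for `m = p.1 ≥ 1`, `j = p.2 ≥ 1`) is a unit of `ℚ⟦q,t⟧`,
since its constant term is `1`. -/
theorem isUnit_factor (p : ℕ × ℕ) (hp : 1 ≤ p.1 ∧ 1 ≤ p.2) :
    IsUnit (1 - (-q2) ^ p.2 * t2 ^ p.1) := by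
  rw [MvPowerSeries.isUnit_iff_constantCoeff]
  have h1 : constantCoeff t2 = 0 := MvPowerSeries.constantCoeff_X 1
  simp [map_sub, map_mul, map_pow, h1, zero_pow (by omega : p.1 ≠ 0)]

/-- The factor `(1 - (-q)^j t^m)^{j a(m)}` of the infinite product, a `ℤ`-power of a
unit of `ℚ⟦q,t⟧`; factors with `m = 0` or `j = 0` are set to `1` (they do not occur
in the product `∏_{m ≥ 1} ∏_{j ≥ 1}`). -/
def factor (a : ℕ → ℤ) (p : ℕ × ℕ) : MvPowerSeries (Fin 2) ℚ :=
  if hp : 1 ≤ p.1 ∧ 1 ≤ p.2 then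
    (((isUnit_factor p hp).unit ^ ((p.2 : ℤ) * a p.1) : (MvPowerSeries (Fin 2) ℚ)ˣ) :
      MvPowerSeries (Fin 2) ℚ)
  else 1

/-- The formal exponential of a power series with zero constant term: for such `F`,
`coeff e (F^i) = 0` whenever `i` exceeds the total degree of `e`, so the coefficient
of `exp F = ∑_{i≥0} F^i / i!` at `e` is the finite sum below. -/
def expMv (F : MvPowerSeries (Fin 2) ℚ) : MvPowerSeries (Fin 2) ℚ :=
  fun e => ∑ i ∈ Finset.range (e 0 + e 1 + 1),
    ((i.factorial : ℚ))⁻¹ * MvPowerSeries.coeff e (F ^ i)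

/-- The power series `∑_{n≥1} ∑_{m≥1} (∑_{k ∣ gcd(n,m)} ((-1)^{n-1} n / k²) a(m/k)) qⁿ tᵐ`
(with zero constant term), given by its coefficient function. -/
def rhsSeries (a : ℕ → ℤ) : MvPowerSeries (Fin 2) ℚ :=
  fun e =>
    if 1 ≤ e 0 ∧ 1 ≤ e 1 then
      ∑ k ∈ (Nat.gcd (e 0) (e 1)).divisors,
        (-1) ^ (e 0 - 1) * (e 0 : ℚ) / (k : ℚ) ^ 2 * (a (e 1 / k) : ℚ)
    else 0

abbrev MS := MvPowerSeries (Fin 2) ℚ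
def wt (e : Fin 2 →₀ ℕ) : ℕ := e 0 + e 1
lemma wt_add (u v : Fin 2 →₀ ℕ) : wt (u + v) = wt u + wt v := by
  simp [wt, Finsupp.add_apply]; ring
lemma wt_eq_zero {u : Fin 2 →₀ ℕ} (h : wt u = 0) : u = 0 := by
  have h0 : u 0 = 0 := by unfold wt at h; omega
  have h1 : u 1 = 0 := by unfold wt at h; omega
  ext i; fin_cases i <;> simpa
lemma wt_mono {u v : Fin 2 →₀ ℕ} (h : u ≤ v) : wt u ≤ wt v := by
  have h0 := Finsupp.le_def.mp h 0
  have h1 := Finsupp.le_def.mp h 1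
  unfold wt; omega
def th (G : MS) : MS := fun e => (wt e : ℚ) * G e
lemma coeff_th (G : MS) (e : Fin 2 →₀ ℕ) : coeff e (th G) = (wt e : ℚ) * coeff e G := rfl
lemma th_mul (G H : MS) : th (G * H) = th G * H + G * th H := by
  ext e
  rw [map_add, coeff_th, coeff_mul, coeff_mul, coeff_mul, Finset.mul_sum, ← Finset.sum_add_distrib]
  refine Finset.sum_congr rfl fun p hp => ?_
  have hpe : p.1 + p.2 = e := Finset.HasAntidiagonal.mem_antidiagonal.mp hp
  have hw : (wt e : ℚ) = (wt p.1 : ℚ) + (wt p.2 : ℚ) := by rw [← hpe, wt_add]; push_cast; ring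
  rw [coeff_th, coeff_th, hw]; ring
lemma coeff_pow_mul_eq_zero {F G : MS} (hF : constantCoeff F = 0)
    (hG : constantCoeff G = 0) :
    ∀ (i : ℕ) (e : Fin 2 →₀ ℕ), wt e < i + 1 → coeff e (F ^ i * G) = 0 := by
  intro i
  induction i with
  | zero =>
    intro e he
    have : e = 0 := wt_eq_zero (by omega)
    rw [pow_zero, one_mul, this, coeff_zero_eq_constantCoeff, hG]
  | succ i ih =>
    intro e he
    have : F ^ (i + 1) * G = (F ^ i * G) * F := by ring
    rw [this, coeff_mul]
    refine Finset.sum_eq_zero fun p hp => ?_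
    have hpe : p.1 + p.2 = e := Finset.HasAntidiagonal.mem_antidiagonal.mp hp
    by_cases h2 : p.2 = 0
    · rw [h2, coeff_zero_eq_constantCoeff, hF, mul_zero]
    · have hw2 : 1 ≤ wt p.2 := by
        rcases Nat.eq_zero_or_pos (wt p.2) with h | h
        · exact absurd (wt_eq_zero h) h2
        · exact h
      have : wt p.1 < i + 1 := by
        have := wt_add p.1 p.2
        rw [hpe] at this; omega
      rw [ih p.1 this, zero_mul]
lemma coeff_pow_eq_zero {F : MS} (hF : constantCoeff F = 0)
    {i : ℕ} {e : Fin 2 →₀ ℕ} (he : wt e < i) : coeff e (F ^ i) = 0 := by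
  obtain ⟨j, rfl⟩ : ∃ j, i = j + 1 := ⟨i - 1, by omega⟩
  rw [pow_succ]
  exact coeff_pow_mul_eq_zero hF hF j e (by omega)
lemma coeff_pow_mul_pow_eq_zero {F G : MS} (hF : constantCoeff F = 0)
    (hG : constantCoeff G = 0) {i j : ℕ} {e : Fin 2 →₀ ℕ} (he : wt e < i + j) :
    coeff e (F ^ i * G ^ j) = 0 := by
  rw [coeff_mul]
  refine Finset.sum_eq_zero fun p hp => ?_
  have hpe : p.1 + p.2 = e := Finset.HasAntidiagonal.mem_antidiagonal.mp hp
  have hw : wt p.1 + wt p.2 = wt e := by rw [← wt_add, hpe]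
  rcases Nat.lt_or_ge (wt p.1) i with h | h
  · rw [coeff_pow_eq_zero hF h, zero_mul]
  · rw [coeff_pow_eq_zero hG (by omega), mul_zero]
lemma le_of_antidiagonal_left {p : (Fin 2 →₀ ℕ) × (Fin 2 →₀ ℕ)} {e : Fin 2 →₀ ℕ}
    (hp : p ∈ Finset.HasAntidiagonal.antidiagonal e) : p.1 ≤ e := by
  have := Finset.HasAntidiagonal.mem_antidiagonal.mp hp
  exact this ▸ le_self_add
lemma le_of_antidiagonal_right {p : (Fin 2 →₀ ℕ) × (Fin 2 →₀ ℕ)} {e : Fin 2 →₀ ℕ}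
    (hp : p ∈ Finset.HasAntidiagonal.antidiagonal e) : p.2 ≤ e := by
  have := Finset.HasAntidiagonal.mem_antidiagonal.mp hp
  exact this ▸ le_add_self
lemma coeff_mul_congr {A A' B B' : MS} {e : Fin 2 →₀ ℕ}
    (hA : ∀ u ≤ e, coeff u A = coeff u A') (hB : ∀ u ≤ e, coeff u B = coeff u B') :
    coeff e (A * B) = coeff e (A' * B') := by
  rw [coeff_mul, coeff_mul]
  refine Finset.sum_congr rfl fun p hp => ?_
  rw [hA p.1 (le_of_antidiagonal_left hp), hB p.2 (le_of_antidiagonal_right hp)]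
lemma coeff_pow_congr {F G : MS} {e : Fin 2 →₀ ℕ}
    (h : ∀ u ≤ e, coeff u F = coeff u G) (i : ℕ) :
    ∀ u ≤ e, coeff u (F ^ i) = coeff u (G ^ i) := by
  induction i with
  | zero => intro u _; rfl
  | succ i ih =>
    intro u hu
    rw [pow_succ, pow_succ]
    exact coeff_mul_congr (fun v hv => ih v (le_trans hv hu)) (fun v hv => h v (le_trans hv hu))
lemma coeff_expMv (F : MS) (e : Fin 2 →₀ ℕ) :
    coeff e (expMv F) = ∑ i ∈ Finset.range (wt e + 1), ((i.factorial : ℚ))⁻¹ * coeff e (F ^ i) := rfl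
lemma coeff_expMv_ext {F : MS} (hF : constantCoeff F = 0) (e : Fin 2 →₀ ℕ)
    {N : ℕ} (hN : wt e ≤ N) :
    coeff e (expMv F) = ∑ i ∈ Finset.range (N + 1), ((i.factorial : ℚ))⁻¹ * coeff e (F ^ i) := by
  rw [coeff_expMv]
  refine Finset.sum_subset ?_ fun i _ hi => ?_
  · intro i hi; simp only [Finset.mem_range] at *; omega
  · simp only [Finset.mem_range, not_lt] at hi
    rw [coeff_pow_eq_zero hF (by omega), mul_zero]
lemma expMv_congr {F G : MS} {e : Fin 2 →₀ ℕ}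
    (h : ∀ u ≤ e, coeff u F = coeff u G) :
    coeff e (expMv F) = coeff e (expMv G) := by
  rw [coeff_expMv, coeff_expMv]
  exact Finset.sum_congr rfl fun i _ => by rw [coeff_pow_congr h i e le_rfl]
lemma expMv_zero : expMv 0 = 1 := by
  ext e
  rw [coeff_expMv]
  rw [Finset.sum_eq_single 0]
  · simp
  · intro i _ hi
    rw [zero_pow hi, map_zero, mul_zero]
  · intro h; simp at h
lemma constantCoeff_expMv (F : MS) : constantCoeff (expMv F) = 1 := by
  rw [← coeff_zero_eq_constantCoeff, coeff_expMv]
  have : wt 0 = 0 := by simp [wt]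
  rw [this]
  simp
lemma sum_triangle_eq_square (g : ℕ → ℕ → ℚ) (N : ℕ) (h0 : ∀ i j, N < i + j → g i j = 0) :
    ∑ n ∈ Finset.range (N+1), ∑ k ∈ Finset.range (n+1), g k (n - k)
      = ∑ i ∈ Finset.range (N+1), ∑ j ∈ Finset.range (N+1), g i j := by
  classical
  have hT : ((Finset.range (N+1)).biUnion fun n => Finset.HasAntidiagonal.antidiagonal n)
      = (Finset.range (N+1) ×ˢ Finset.range (N+1)).filter (fun p => p.1 + p.2 ≤ N) := by
    ext p
    simp only [Finset.mem_biUnion, Finset.mem_range, Finset.HasAntidiagonal.mem_antidiagonal,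
      Finset.mem_filter, Finset.mem_product]
    constructor
    · rintro ⟨n, hn, rfl⟩; omega
    · intro h; exact ⟨p.1 + p.2, by omega, rfl⟩
  have hdisj : ∀ n ∈ Finset.range (N+1), ∀ m ∈ Finset.range (N+1), n ≠ m →
      Disjoint (Finset.HasAntidiagonal.antidiagonal n) (Finset.HasAntidiagonal.antidiagonal m) := by
    intro n _ m _ hnm
    refine Finset.disjoint_left.mpr fun p hp hp' => ?_
    rw [Finset.HasAntidiagonal.mem_antidiagonal] at hp hp'
    exact hnm (hp ▸ hp')
  calc ∑ n ∈ Finset.range (N+1), ∑ k ∈ Finset.range (n+1), g k (n - k)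
      = ∑ n ∈ Finset.range (N+1), ∑ p ∈ Finset.HasAntidiagonal.antidiagonal n, g p.1 p.2 := by
        refine Finset.sum_congr rfl fun n _ => ?_
        rw [Finset.Nat.sum_antidiagonal_eq_sum_range_succ_mk]
    _ = ∑ p ∈ (Finset.range (N+1)).biUnion fun n => Finset.HasAntidiagonal.antidiagonal n, g p.1 p.2 :=
        (Finset.sum_biUnion hdisj).symm
    _ = ∑ p ∈ (Finset.range (N+1) ×ˢ Finset.range (N+1)).filter (fun p => p.1 + p.2 ≤ N),
          g p.1 p.2 := by rw [hT]
    _ = ∑ p ∈ Finset.range (N+1) ×ˢ Finset.range (N+1), g p.1 p.2 := by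
        refine Finset.sum_filter_of_ne fun p hp hne => ?_
        by_contra h
        exact hne (h0 p.1 p.2 (by omega))
    _ = ∑ i ∈ Finset.range (N+1), ∑ j ∈ Finset.range (N+1), g i j := Finset.sum_product _ _ _

lemma expMv_add {F G : MS} (hF : constantCoeff F = 0)
    (hG : constantCoeff G = 0) :
    expMv (F + G) = expMv F * expMv G := by
  classical
  have hFG : constantCoeff (F + G) = 0 := by rw [map_add, hF, hG, add_zero]
  ext e
  set N := wt e with hNdef
  set g : ℕ → ℕ → ℚ := fun i j =>
    ((i.factorial : ℚ))⁻¹ * ((j.factorial : ℚ))⁻¹ * coeff e (F ^ i * G ^ j) with hg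
  have hg0 : ∀ i j, N < i + j → g i j = 0 := fun i j h => by
    rw [hg]; dsimp only
    rw [coeff_pow_mul_pow_eq_zero hF hG h, mul_zero]
  have hLHS : coeff e (expMv (F + G)) =
      ∑ n ∈ Finset.range (N+1), ∑ k ∈ Finset.range (n+1), g k (n - k) := by
    rw [coeff_expMv]
    refine Finset.sum_congr rfl fun n _ => ?_
    rw [add_pow, map_sum, Finset.mul_sum]
    refine Finset.sum_congr rfl fun k hk => ?_
    rw [← map_natCast (C) (n.choose k), coeff_mul_C]
    have hkn : k ≤ n := by simpa using Nat.lt_succ_iff.mp (Finset.mem_range.mp hk)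
    rw [hg]; dsimp only
    have hfac : (n.factorial : ℚ) = (n.choose k : ℚ) * (k.factorial : ℚ) * ((n-k).factorial : ℚ) := by
      rw [← Nat.choose_mul_factorial_mul_factorial hkn]; push_cast; ring
    have h1 : (n.factorial : ℚ) ≠ 0 := Nat.cast_ne_zero.mpr n.factorial_ne_zero
    have h2 : (k.factorial : ℚ) ≠ 0 := Nat.cast_ne_zero.mpr k.factorial_ne_zero
    have h3 : ((n-k).factorial : ℚ) ≠ 0 := Nat.cast_ne_zero.mpr (n-k).factorial_ne_zero
    have h4 : (n.choose k : ℚ) ≠ 0 := Nat.cast_ne_zero.mpr (Nat.choose_pos hkn).ne'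
    field_simp [hfac]
    rw [hfac]; ring
  have hRHS : coeff e (expMv F * expMv G) =
      ∑ i ∈ Finset.range (N+1), ∑ j ∈ Finset.range (N+1), g i j := by
    rw [coeff_mul]
    have step : ∀ p ∈ Finset.HasAntidiagonal.antidiagonal e,
        coeff p.1 (expMv F) * coeff p.2 (expMv G)
          = ∑ i ∈ Finset.range (N+1), ∑ j ∈ Finset.range (N+1),
              (((i.factorial : ℚ))⁻¹ * coeff p.1 (F ^ i)) *
              (((j.factorial : ℚ))⁻¹ * coeff p.2 (G ^ j)) := by
      intro p hp
      rw [coeff_expMv_ext hF p.1 (wt_mono (le_of_antidiagonal_left hp)),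
          coeff_expMv_ext hG p.2 (wt_mono (le_of_antidiagonal_right hp)),
          Finset.sum_mul_sum]
    rw [Finset.sum_congr rfl step, Finset.sum_comm]
    refine Finset.sum_congr rfl fun i _ => ?_
    rw [Finset.sum_comm]
    refine Finset.sum_congr rfl fun j _ => ?_
    rw [hg]; dsimp only
    rw [coeff_mul, Finset.mul_sum]
    refine Finset.sum_congr rfl fun p _ => ?_
    ring
  rw [hLHS, hRHS, sum_triangle_eq_square g N hg0]

lemma sum_Icc_one {β : Type*} [AddCommMonoid β] (N : ℕ) (f : ℕ → β) :
    ∑ k ∈ Finset.Icc 1 N, f k = ∑ i ∈ Finset.range N, f (i+1) := by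
  rw [← Finset.Ico_add_one_right_eq_Icc, Finset.sum_Ico_eq_sum_range]
  simp [add_comm]
lemma th_pow (F : MS) (k : ℕ) : th (F ^ (k+1)) = ((k+1 : ℕ) : ℚ) • (F ^ k * th F) := by
  induction k with
  | zero => simp [pow_one]
  | succ k ih =>
    have h1 : F ^ (k+1+1) = F ^ (k+1) * F := by ring
    rw [h1, th_mul, ih, smul_mul_assoc]
    have h2 : F ^ k * th F * F = F ^ (k+1) * th F := by ring
    rw [h2]
    have h3 : ((k+1+1 : ℕ) : ℚ) = ((k+1 : ℕ) : ℚ) + 1 := by push_cast; ring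
    rw [h3, add_smul, one_smul]
lemma constantCoeff_th (F : MS) : constantCoeff (th F) = 0 := by
  rw [← coeff_zero_eq_constantCoeff, coeff_th]
  have : wt 0 = 0 := by simp [wt]
  rw [this]; simp
lemma th_one_sub (F : MS) : th (1 - F) = - th F := by
  ext e
  rw [coeff_th, map_neg, coeff_th, map_sub]
  by_cases he : e = 0
  · subst he
    have : wt 0 = 0 := by simp [wt]
    rw [this]; simp
  · rw [MvPowerSeries.coeff_one, if_neg he]; ring

def logOS (F : MS) : MS := fun e => -∑ k ∈ Finset.Icc 1 (wt e), ((k : ℚ))⁻¹ * coeff e (F ^ k)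
lemma coeff_logOS (F : MS) (e : Fin 2 →₀ ℕ) :
    coeff e (logOS F) = -∑ k ∈ Finset.Icc 1 (wt e), ((k : ℚ))⁻¹ * coeff e (F ^ k) := rfl
lemma constantCoeff_logOS (F : MS) : constantCoeff (logOS F) = 0 := by
  rw [← coeff_zero_eq_constantCoeff, coeff_logOS]
  have : wt 0 = 0 := by simp [wt]
  rw [this]
  simp
lemma coeff_logOS_ext {F : MS} (hF : constantCoeff F = 0) (e : Fin 2 →₀ ℕ)
    {N : ℕ} (hN : wt e ≤ N) :
    coeff e (logOS F) = -∑ k ∈ Finset.Icc 1 N, ((k : ℚ))⁻¹ * coeff e (F ^ k) := by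
  rw [coeff_logOS, neg_inj]
  refine Finset.sum_subset ?_ fun k hk hk2 => ?_
  · intro k hk; simp only [Finset.mem_Icc] at *; omega
  · simp only [Finset.mem_Icc] at hk hk2
    rw [coeff_pow_eq_zero hF (by omega), mul_zero]

lemma th_logOS_mul (F : MS) (hF : constantCoeff F = 0) (e : Fin 2 →₀ ℕ) :
    coeff e (th (logOS F) * (1 - F)) = coeff e (-(th F)) := by
  classical
  set N := wt e with hN
  set S : MS := ∑ k ∈ Finset.Icc 1 N, ((k:ℚ))⁻¹ • th (F ^ k) with hS
  have claim1 : ∀ u ≤ e, coeff u (th (logOS F)) = coeff u (-S) := by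
    intro u hu
    rw [map_neg, hS, map_sum, coeff_th, coeff_logOS_ext hF u (wt_mono hu), mul_neg, neg_inj,
      Finset.mul_sum]
    refine Finset.sum_congr rfl fun k _ => ?_
    rw [LinearMap.map_smul, coeff_th, smul_eq_mul]
    ring
  have hgeom : S = (∑ i ∈ Finset.range N, F ^ i) * th F := by
    rw [hS, sum_Icc_one, Finset.sum_mul]
    refine Finset.sum_congr rfl fun i _ => ?_
    rw [th_pow, smul_smul]
    have : ((i+1 : ℕ) : ℚ) ≠ 0 := by positivity
    rw [inv_mul_cancel₀ this, one_smul]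
  have key : coeff e ((-S) * (1 - F)) = coeff e (-(th F)) := by
    have hgm : (-S) * (1 - F) = -(th F) + F ^ N * th F := by
      have h := geom_sum_mul F N
      rw [hgeom]
      calc -((∑ i ∈ Finset.range N, F ^ i) * th F) * (1 - F)
          = ((∑ i ∈ Finset.range N, F ^ i) * (F - 1)) * th F := by ring
        _ = (F ^ N - 1) * th F := by rw [h]
        _ = -(th F) + F ^ N * th F := by ring
    rw [hgm, map_add, map_neg]
    rw [coeff_pow_mul_eq_zero hF (constantCoeff_th F) N e (by omega), add_zero]
  rw [← key]
  exact coeff_mul_congr claim1 (fun u _ => rfl)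

lemma th_expMv (L : MS) (hL : constantCoeff L = 0) :
    th (expMv L) = th L * expMv L := by
  classical
  ext e
  set N := wt e with hN
  have hLHS : coeff e (th (expMv L)) =
      ∑ j ∈ Finset.range N, ((j.factorial : ℚ))⁻¹ * coeff e (L ^ j * th L) := by
    rw [coeff_th, coeff_expMv, Finset.mul_sum, Finset.sum_range_succ']
    have hz : (N : ℚ) * (((Nat.factorial 0 : ℕ) : ℚ))⁻¹ * coeff e (L ^ 0) = 0 := by
      rw [pow_zero, MvPowerSeries.coeff_one]
      by_cases he : e = 0
      · have : N = 0 := by rw [hN, he]; simp [wt]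
        rw [this]; simp
      · rw [if_neg he]; simp
    rw [mul_assoc] at hz
    rw [hz, add_zero]
    refine Finset.sum_congr rfl fun j hj => ?_
    have hNne : (N : ℚ) ≠ 0 := by
      have := Finset.mem_range.mp hj
      exact Nat.cast_ne_zero.mpr (by omega)
    have h1 : (N : ℚ) * coeff e (L ^ (j+1)) = ((j+1 : ℕ) : ℚ) * coeff e (L ^ j * th L) := by
      rw [← coeff_th, th_pow, LinearMap.map_smul, smul_eq_mul]
    have h2 : (((j+1).factorial : ℕ) : ℚ) = ((j+1 : ℕ) : ℚ) * ((j.factorial : ℕ) : ℚ) := by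
      rw [Nat.factorial_succ]; push_cast; ring
    have h3 : ((j+1 : ℕ) : ℚ) ≠ 0 := by positivity
    have h4 : ((j.factorial : ℕ) : ℚ) ≠ 0 := Nat.cast_ne_zero.mpr j.factorial_ne_zero
    rw [h2]
    field_simp
    push_cast at h1 ⊢
    rw [hN] at h1
    linear_combination h1
  have hRHS : coeff e (th L * expMv L) =
      ∑ i ∈ Finset.range (N+1), ((i.factorial : ℚ))⁻¹ * coeff e (th L * L ^ i) := by
    rw [coeff_mul]
    have step : ∀ p ∈ Finset.HasAntidiagonal.antidiagonal e,
        coeff p.1 (th L) * coeff p.2 (expMv L)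
          = ∑ i ∈ Finset.range (N+1), ((i.factorial : ℚ))⁻¹ *
              (coeff p.1 (th L) * coeff p.2 (L ^ i)) := by
      intro p hp
      rw [coeff_expMv_ext hL p.2 (wt_mono (le_of_antidiagonal_right hp)), Finset.mul_sum]
      refine Finset.sum_congr rfl fun i _ => by ring
    rw [Finset.sum_congr rfl step, Finset.sum_comm]
    refine Finset.sum_congr rfl fun i _ => ?_
    rw [coeff_mul, Finset.mul_sum]
  rw [hLHS, hRHS, Finset.sum_range_succ]
  have hlast : coeff e (th L * L ^ N) = 0 := by
    rw [mul_comm]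
    exact coeff_pow_mul_eq_zero hL (constantCoeff_th L) N e (by omega)
  rw [hlast, mul_zero, add_zero]
  exact Finset.sum_congr rfl fun j _ => by rw [mul_comm (L ^ j) (th L)]

lemma th_unique {F Y Z : MS} (hF : constantCoeff F = 0)
    (hY : th Y * (1 - F) = -(th F) * Y) (hZ : th Z * (1 - F) = -(th F) * Z)
    (h0 : coeff 0 Y = coeff 0 Z) : Y = Z := by
  classical
  ext e
  suffices h : ∀ n : ℕ, ∀ e : Fin 2 →₀ ℕ, wt e = n → coeff e Y = coeff e Z by
    exact h (wt e) e rfl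
  intro n
  induction n using Nat.strong_induction_on with
  | _ n ih =>
    intro e he
    rcases Nat.eq_zero_or_pos n with hn | hn
    · subst hn
      rw [wt_eq_zero he]
      exact h0
    -- expand the relations at e
    have hYe : coeff e (th Y) - coeff e (th Y * F) = -(coeff e (th F * Y)) := by
      have := congrArg (coeff e) hY
      rw [mul_sub, mul_one, map_sub, neg_mul, map_neg] at this
      exact this
    have hZe : coeff e (th Z) - coeff e (th Z * F) = -(coeff e (th F * Z)) := by
      have := congrArg (coeff e) hZ
      rw [mul_sub, mul_one, map_sub, neg_mul, map_neg] at this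
      exact this
    have hsum : coeff e (th Y * F) - coeff e (th F * Y)
        - (coeff e (th Z * F) - coeff e (th F * Z)) = 0 := by
      rw [coeff_mul, coeff_mul, coeff_mul, coeff_mul, ← Finset.sum_sub_distrib,
        ← Finset.sum_sub_distrib, ← Finset.sum_sub_distrib]
      refine Finset.sum_eq_zero fun p hp => ?_
      have hpe : p.1 + p.2 = e := Finset.HasAntidiagonal.mem_antidiagonal.mp hp
      have hwadd : wt p.1 + wt p.2 = n := by rw [← he, ← hpe, wt_add]
      simp only [coeff_th]
      by_cases h1 : p.1 = 0
      · rw [h1]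
        have : wt (0 : Fin 2 →₀ ℕ) = 0 := by simp [wt]
        rw [this]
        push_cast
        ring
      · by_cases h2 : p.2 = 0
        · rw [h2, coeff_zero_eq_constantCoeff, hF]
          have h0' : constantCoeff Y = constantCoeff Z := h0
          rw [h0']
          ring
        · have hw1 : 1 ≤ wt p.1 := Nat.one_le_iff_ne_zero.mpr (fun hc => h1 (wt_eq_zero hc))
          have hw2 : 1 ≤ wt p.2 := Nat.one_le_iff_ne_zero.mpr (fun hc => h2 (wt_eq_zero hc))
          rw [ih (wt p.1) (by omega) p.1 rfl, ih (wt p.2) (by omega) p.2 rfl]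
          ring
    have : (n : ℚ) * coeff e Y = (n : ℚ) * coeff e Z := by
      have h5 : coeff e (th Y) = coeff e (th Z) := by
        have := hYe
        have := hZe
        linarith [hYe, hZe, hsum]
      rw [coeff_th, coeff_th, he] at h5
      exact h5
    have hn0 : (n : ℚ) ≠ 0 := Nat.cast_ne_zero.mpr (by omega)
    exact mul_left_cancel₀ hn0 this

lemma expMv_logOS {F : MS} (hF : constantCoeff F = 0) :
    expMv (logOS F) = 1 - F := by
  have hA : th (logOS F) * (1 - F) = -(th F) := by
    ext e
    exact th_logOS_mul F hF e
  refine th_unique hF ?_ ?_ ?_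
  · rw [th_expMv (logOS F) (constantCoeff_logOS F)]
    calc th (logOS F) * expMv (logOS F) * (1 - F)
        = (th (logOS F) * (1 - F)) * expMv (logOS F) := by ring
      _ = -(th F) * expMv (logOS F) := by rw [hA]
  · rw [th_one_sub]
  · exact (by rw [constantCoeff_expMv, map_sub, map_one, hF, sub_zero] :
      constantCoeff (expMv (logOS F)) = constantCoeff (1 - F))

lemma constantCoeff_smul' (c : ℚ) (F : MS) (h : constantCoeff F = 0) :
    constantCoeff (c • F) = 0 := by
  rw [← coeff_zero_eq_constantCoeff_apply, MvPowerSeries.coeff_smul,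
    coeff_zero_eq_constantCoeff_apply, h, mul_zero]

lemma expMv_sum {ι : Type*} (s : Finset ι) (f : ι → MS)
    (h : ∀ i ∈ s, constantCoeff (f i) = 0) :
    expMv (∑ i ∈ s, f i) = ∏ i ∈ s, expMv (f i) := by
  classical
  induction s using Finset.induction_on with
  | empty => simp [expMv_zero]
  | @insert a s' hnotmem ih =>
    rw [Finset.sum_insert hnotmem, Finset.prod_insert hnotmem,
      expMv_add (h a (Finset.mem_insert_self a s'))
        (by rw [map_sum]; exact Finset.sum_eq_zero fun i hi => h i (Finset.mem_insert_of_mem hi)),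
      ih (fun i hi => h i (Finset.mem_insert_of_mem hi))]

lemma expMv_nsmul {L : MS} (hL : constantCoeff L = 0) (n : ℕ) :
    expMv ((n : ℚ) • L) = expMv L ^ n := by
  induction n with
  | zero => simp [expMv_zero]
  | succ n ih =>
    have : ((n + 1 : ℕ) : ℚ) • L = (n : ℚ) • L + L := by
      push_cast
      rw [add_smul, one_smul]
    rw [this, expMv_add (constantCoeff_smul' _ _ hL) hL, ih, pow_succ]

lemma constantCoeff_zsmul_logOS (c : ℚ) (F : MS) :
    constantCoeff (c • logOS F) = 0 :=
  constantCoeff_smul' c _ (constantCoeff_logOS F)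

lemma expMv_zpow {L : MS} (hL : constantCoeff L = 0) (u : MSˣ)
    (hu : (u : MS) = expMv L) (N : ℤ) :
    ((u ^ N : MSˣ) : MS) = expMv ((N : ℚ) • L) := by
  cases N with
  | ofNat n =>
    rw [Int.ofNat_eq_coe, zpow_natCast, Units.val_pow_eq_pow_val, hu, ← expMv_nsmul hL]
    norm_num
  | negSucc n =>
    have hpos : ((u ^ (n+1) : MSˣ) : MS) = expMv (((n+1 : ℕ) : ℚ) • L) := by
      rw [Units.val_pow_eq_pow_val, hu, ← expMv_nsmul hL]
    have hmul : expMv ((Int.negSucc n : ℚ) • L) * ((u ^ (n+1) : MSˣ) : MS) = 1 := by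
      rw [hpos, ← expMv_add (constantCoeff_smul' _ _ hL) (constantCoeff_smul' _ _ hL)]
      have : (Int.negSucc n : ℚ) • L + ((n+1 : ℕ) : ℚ) • L = 0 := by
        rw [← add_smul]
        have : (Int.negSucc n : ℚ) + ((n+1 : ℕ) : ℚ) = 0 := by
          push_cast [Int.negSucc_eq]
          ring
        rw [this, zero_smul]
      rw [this, expMv_zero]
    have hns : (u ^ (Int.negSucc n) : MSˣ) = (u ^ (n+1) : MSˣ)⁻¹ := zpow_negSucc u n
    rw [hns]
    have h2 : ((u ^ (n+1) : MSˣ) : MS) * (((u ^ (n+1) : MSˣ)⁻¹ : MSˣ) : MS) = 1 := by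
      rw [← Units.val_mul, mul_inv_cancel, Units.val_one]
    calc (((u ^ (n+1) : MSˣ)⁻¹ : MSˣ) : MS)
        = expMv ((Int.negSucc n : ℚ) • L) * ((u ^ (n+1) : MSˣ) : MS)
            * (((u ^ (n+1) : MSˣ)⁻¹ : MSˣ) : MS) := by rw [hmul, one_mul]
      _ = expMv ((Int.negSucc n : ℚ) • L)
            * (((u ^ (n+1) : MSˣ) : MS) * (((u ^ (n+1) : MSˣ)⁻¹ : MSˣ) : MS)) := by ring
      _ = expMv ((Int.negSucc n : ℚ) • L) := by rw [h2, mul_one]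

def xp (p : ℕ × ℕ) : MS := (-q2) ^ p.2 * t2 ^ p.1
def dg (p : ℕ × ℕ) : Fin 2 →₀ ℕ := Finsupp.single 0 p.2 + Finsupp.single 1 p.1

lemma dg_apply0 (p : ℕ × ℕ) : dg p 0 = p.2 := by
  simp [dg, Finsupp.single_apply]
lemma dg_apply1 (p : ℕ × ℕ) : dg p 1 = p.1 := by
  simp [dg, Finsupp.single_apply]

lemma fin2_eq_iff (u : Fin 2 →₀ ℕ) (p : ℕ × ℕ) : u = dg p ↔ u 0 = p.2 ∧ u 1 = p.1 := by
  constructor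
  · rintro rfl; exact ⟨dg_apply0 p, dg_apply1 p⟩
  · rintro ⟨h0, h1⟩
    ext i
    fin_cases i
    · rw [show ((⟨0, by omega⟩ : Fin 2)) = 0 from rfl, h0, dg_apply0]
    · rw [show ((⟨1, by omega⟩ : Fin 2)) = 1 from rfl, h1, dg_apply1]

lemma xp_eq (p : ℕ × ℕ) : xp p = monomial (dg p) ((-1 : ℚ) ^ p.2) := by
  rw [xp, q2, t2, neg_pow]
  have hX0 : (X 0 : MS) ^ p.2 = monomial (Finsupp.single 0 p.2) 1 := X_pow_eq 0 p.2
  have hX1 : (X 1 : MS) ^ p.1 = monomial (Finsupp.single 1 p.1) 1 := X_pow_eq 1 p.1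
  have hneg : ((-1 : MS)) ^ p.2 = monomial 0 ((-1 : ℚ) ^ p.2) := by
    have hC : (-1 : MS) = monomial (0 : Fin 2 →₀ ℕ) (-1 : ℚ) := by
      rw [monomial_zero_eq_C_apply, map_neg, map_one]
    rw [hC]
    induction p.2 with
    | zero => simp
    | succ k ih => rw [pow_succ, pow_succ, ih, monomial_mul_monomial, add_zero]
  rw [hneg, hX0, hX1, monomial_mul_monomial, monomial_mul_monomial]
  simp [dg]

lemma coeff_xp (p : ℕ × ℕ) (u : Fin 2 →₀ ℕ) :
    coeff u (xp p) = if u = dg p then (-1 : ℚ) ^ p.2 else 0 := by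
  rw [xp_eq, coeff_monomial]

lemma xp_pow (p : ℕ × ℕ) (k : ℕ) : xp p ^ k = xp (p.1 * k, p.2 * k) := by
  rw [xp, xp, mul_pow, ← pow_mul, ← pow_mul]

lemma constantCoeff_xp (p : ℕ × ℕ) (hp : 1 ≤ p.1) : constantCoeff (xp p) = 0 := by
  rw [← coeff_zero_eq_constantCoeff_apply, coeff_xp]
  rw [if_neg]
  intro h
  have := (fin2_eq_iff 0 p).mp h
  simp at this
  omega

lemma unit_val (p : ℕ × ℕ) (hp : 1 ≤ p.1 ∧ 1 ≤ p.2) :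
    ((isUnit_factor p hp).unit : MS) = 1 - xp p := IsUnit.unit_spec _

lemma factor_eq_expMv (a : ℕ → ℤ) (p : ℕ × ℕ) (hp : 1 ≤ p.1 ∧ 1 ≤ p.2) :
    factor a p = expMv ((((p.2 : ℤ) * a p.1 : ℤ) : ℚ) • logOS (xp p)) := by
  rw [factor, dif_pos hp]
  refine expMv_zpow (constantCoeff_logOS (xp p)) _ ?_ ((p.2 : ℤ) * a p.1)
  rw [unit_val p hp, expMv_logOS (constantCoeff_xp p hp.1)]

lemma unit_zpow_one_add (p : ℕ × ℕ) (hp : 1 ≤ p.1 ∧ 1 ≤ p.2) (N : ℤ) :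
    ∃ c : MS, (((isUnit_factor p hp).unit ^ N : MSˣ) : MS) = 1 + xp p * c := by
  set u := (isUnit_factor p hp).unit with hu
  have hval : (u : MS) = 1 - xp p := unit_val p hp
  have hinv : ∃ c : MS, ((u⁻¹ : MSˣ) : MS) = 1 + xp p * c := by
    refine ⟨((u⁻¹ : MSˣ) : MS), ?_⟩
    have h1 : ((u : MSˣ) : MS) * ((u⁻¹ : MSˣ) : MS) = 1 := by
      rw [← Units.val_mul, mul_inv_cancel, Units.val_one]
    rw [hval] at h1
    linear_combination h1
  induction N using Int.induction_on with
  | zero => exact ⟨0, by simp⟩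
  | succ n ih =>
    obtain ⟨c, hc⟩ := ih
    refine ⟨c - 1 - xp p * c, ?_⟩
    have : (u ^ ((n : ℤ) + 1) : MSˣ) = (u ^ (n : ℤ) : MSˣ) * u := by
      rw [zpow_add_one]
    rw [this, Units.val_mul, hc, hval]
    ring
  | pred n ih =>
    obtain ⟨c, hc⟩ := ih
    obtain ⟨d, hd⟩ := hinv
    refine ⟨c + d + xp p * (c * d), ?_⟩
    have : (u ^ (-(n : ℤ) - 1) : MSˣ) = (u ^ (-(n : ℤ)) : MSˣ) * u⁻¹ := by
      rw [zpow_sub_one]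
    rw [this, Units.val_mul, hc, hd]
    ring

lemma coeff_mul_factor_outside (a : ℕ → ℤ) (e : Fin 2 →₀ ℕ) (p : ℕ × ℕ)
    (hp : e 0 < p.2 ∨ e 1 < p.1 ∨ ¬(1 ≤ p.1 ∧ 1 ≤ p.2)) (A : MS) :
    coeff e (A * factor a p) = coeff e A := by
  by_cases hv : 1 ≤ p.1 ∧ 1 ≤ p.2
  · obtain ⟨c, hc⟩ := unit_zpow_one_add p hv ((p.2 : ℤ) * a p.1)
    have hfac : factor a p = 1 + xp p * c := by rw [factor, dif_pos hv]; exact hc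
    rw [hfac, mul_add, mul_one, map_add]
    have : A * (xp p * c) = monomial (dg p) ((-1 : ℚ) ^ p.2) * (A * c) := by
      rw [← xp_eq]; ring
    rw [this, coeff_monomial_mul, if_neg, add_zero]
    intro hle
    have h0 := Finsupp.le_def.mp hle 0
    have h1 := Finsupp.le_def.mp hle 1
    rw [dg_apply0] at h0
    rw [dg_apply1] at h1
    rcases hp with h | h | h
    · omega
    · omega
    · exact h hv
  · rw [factor, dif_neg hv, mul_one]

lemma coeff_mul_prod_outside (a : ℕ → ℤ) (e : Fin 2 →₀ ℕ) (s : Finset (ℕ × ℕ))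
    (hs : ∀ p ∈ s, e 0 < p.2 ∨ e 1 < p.1 ∨ ¬(1 ≤ p.1 ∧ 1 ≤ p.2)) (A : MS) :
    coeff e (A * ∏ p ∈ s, factor a p) = coeff e A := by
  classical
  induction s using Finset.induction_on generalizing A with
  | empty => simp
  | @insert q s' hq ih =>
    rw [Finset.prod_insert hq]
    have : A * (factor a q * ∏ p ∈ s', factor a p) = (A * ∏ p ∈ s', factor a p) * factor a q := by
      ring
    rw [this, coeff_mul_factor_outside a e q (hs q (Finset.mem_insert_self q s')) _,
      ih (fun p hp => hs p (Finset.mem_insert_of_mem hp)) A]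

lemma coeff_sum_logOS (a : ℕ → ℤ) (e e' : Fin 2 →₀ ℕ) (he : e' ≤ e) :
    coeff e' (∑ p ∈ Finset.Icc 1 (e 1) ×ˢ Finset.Icc 1 (e 0),
      ((((p.2 : ℤ) * a p.1 : ℤ) : ℚ)) • logOS (xp p)) = rhsSeries a e' := by
  classical
  set W := wt e' with hW
  set box := Finset.Icc 1 (e 1) ×ˢ Finset.Icc 1 (e 0) with hbox
  set T : ℕ × ℕ → ℕ → ℚ := fun p k =>
    -((((p.2 : ℤ) * a p.1 : ℤ) : ℚ) * ((k : ℚ))⁻¹ *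
      (if e' = dg (p.1 * k, p.2 * k) then (-1 : ℚ) ^ (p.2 * k) else 0)) with hT
  have hterm : ∀ p ∈ box,
      coeff e' ((((p.2 : ℤ) * a p.1 : ℤ) : ℚ) • logOS (xp p))
        = ∑ k ∈ Finset.Icc 1 W, T p k := by
    intro p _
    rw [MvPowerSeries.coeff_smul, coeff_logOS, mul_neg, Finset.mul_sum,
      ← Finset.sum_neg_distrib]
    refine Finset.sum_congr rfl fun k _ => ?_
    rw [hT]
    simp only
    rw [xp_pow, coeff_xp]
    ring
  rw [map_sum, Finset.sum_congr rfl hterm, Finset.sum_comm]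
  -- inner sums
  set v : ℕ → ℚ := fun k =>
    -(((e' 0 / k : ℕ) : ℚ) * ((a (e' 1 / k) : ℤ) : ℚ) * ((k : ℚ))⁻¹ * (-1 : ℚ) ^ (e' 0)) with hv
  have hinner : ∀ k ∈ Finset.Icc 1 W, (∑ p ∈ box, T p k)
      = if k ∣ e' 0 ∧ k ∣ e' 1 ∧ 1 ≤ e' 0 ∧ 1 ≤ e' 1 then v k else 0 := by
    intro k hk
    have hk1 : 1 ≤ k := (Finset.mem_Icc.mp hk).1
    by_cases hC : k ∣ e' 0 ∧ k ∣ e' 1 ∧ 1 ≤ e' 0 ∧ 1 ≤ e' 1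
    · rw [if_pos hC]
      obtain ⟨hd0, hd1, h10, h11⟩ := hC
      set p0 : ℕ × ℕ := (e' 1 / k, e' 0 / k) with hp0
      have hmem : p0 ∈ box := by
        rw [hbox, Finset.mem_product, Finset.mem_Icc, Finset.mem_Icc]
        have e1le : e' 1 ≤ e 1 := Finsupp.le_def.mp he 1
        have e0le : e' 0 ≤ e 0 := Finsupp.le_def.mp he 0
        refine ⟨⟨Nat.div_pos (Nat.le_of_dvd (by omega) hd1) (by omega), ?_⟩,
          ⟨Nat.div_pos (Nat.le_of_dvd (by omega) hd0) (by omega), ?_⟩⟩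
        · exact le_trans (Nat.div_le_self _ _) e1le
        · exact le_trans (Nat.div_le_self _ _) e0le
      rw [Finset.sum_eq_single_of_mem p0 hmem]
      · rw [hT]
        simp only
        have hcond : e' = dg (p0.1 * k, p0.2 * k) := by
          rw [fin2_eq_iff]
          constructor
          · show e' 0 = p0.2 * k
            rw [hp0]
            exact (Nat.div_mul_cancel hd0).symm
          · show e' 1 = p0.1 * k
            rw [hp0]
            exact (Nat.div_mul_cancel hd1).symm
        rw [if_pos hcond, hv]
        show -(((((e' 0 / k : ℕ) : ℤ) * a (e' 1 / k) : ℤ) : ℚ) * ((k : ℚ))⁻¹ *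
            (-1 : ℚ) ^ ((e' 0 / k) * k)) = _
        rw [Nat.div_mul_cancel hd0, Int.cast_mul]
        try rw [Int.cast_natCast]
        try ring
      · intro p hp hne
        rw [hT]
        simp only
        rw [if_neg, mul_zero, neg_zero]
        intro hcond
        rw [fin2_eq_iff] at hcond
        obtain ⟨hc0, hc1⟩ := hcond
        simp only at hc0 hc1
        apply hne
        rw [hp0]
        have : p.2 = e' 0 / k := by rw [hc0, Nat.mul_div_cancel _ (by omega : 0 < k)]
        have h2 : p.1 = e' 1 / k := by rw [hc1, Nat.mul_div_cancel _ (by omega : 0 < k)]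
        rw [Prod.ext_iff]
        exact ⟨h2, this⟩
    · rw [if_neg hC]
      refine Finset.sum_eq_zero fun p hp => ?_
      rw [hT]
      simp only
      rw [if_neg, mul_zero, neg_zero]
      intro hcond
      rw [fin2_eq_iff] at hcond
      obtain ⟨hc0, hc1⟩ := hcond
      simp only at hc0 hc1
      rw [hbox, Finset.mem_product, Finset.mem_Icc, Finset.mem_Icc] at hp
      obtain ⟨⟨hp1, _⟩, ⟨hp2, _⟩⟩ := hp
      refine hC ⟨by rw [hc0]; exact dvd_mul_left k p.2, by rw [hc1]; exact dvd_mul_left k p.1, ?_, ?_⟩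
      · rw [hc0]; exact Nat.mul_pos (by omega) (by omega)
      · rw [hc1]; exact Nat.mul_pos (by omega) (by omega)
  rw [Finset.sum_congr rfl hinner]
  -- now compare with rhsSeries
  show _ = rhsSeries a e'
  rw [rhsSeries]
  by_cases h : 1 ≤ e' 0 ∧ 1 ≤ e' 1
  · rw [if_pos h]
    have hgcdpos : 0 < Nat.gcd (e' 0) (e' 1) := Nat.gcd_pos_of_pos_left _ (by omega)
    have hmemiff : ∀ k ∈ Finset.Icc 1 W,
        (if k ∣ e' 0 ∧ k ∣ e' 1 ∧ 1 ≤ e' 0 ∧ 1 ≤ e' 1 then v k else 0)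
          = if k ∈ (Nat.gcd (e' 0) (e' 1)).divisors then v k else 0 := by
      intro k hk
      congr 1
      rw [eq_iff_iff, Nat.mem_divisors]
      constructor
      · rintro ⟨h0, h1, _⟩; exact ⟨Nat.dvd_gcd h0 h1, by omega⟩
      · rintro ⟨hg, _⟩
        exact ⟨dvd_trans hg (Nat.gcd_dvd_left _ _), dvd_trans hg (Nat.gcd_dvd_right _ _), h.1, h.2⟩
    rw [Finset.sum_congr rfl hmemiff, Finset.sum_ite_mem]
    have hsub : (Nat.gcd (e' 0) (e' 1)).divisors ⊆ Finset.Icc 1 W := by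
      intro k hk
      rw [Nat.mem_divisors] at hk
      have hkpos : 0 < k := Nat.pos_of_dvd_of_pos hk.1 hgcdpos
      have : k ≤ Nat.gcd (e' 0) (e' 1) := Nat.le_of_dvd hgcdpos hk.1
      have hle : Nat.gcd (e' 0) (e' 1) ≤ e' 0 := Nat.gcd_le_left _ (by omega)
      rw [Finset.mem_Icc]
      have : W = e' 0 + e' 1 := rfl
      omega
    rw [Finset.inter_eq_right.mpr hsub]
    refine Finset.sum_congr rfl fun k hk => ?_
    rw [Nat.mem_divisors] at hk
    have hk0 : k ∣ e' 0 := dvd_trans hk.1 (Nat.gcd_dvd_left _ _)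
    have hkpos : 0 < k := Nat.pos_of_dvd_of_pos hk.1 hgcdpos
    have hkne : (k : ℚ) ≠ 0 := Nat.cast_ne_zero.mpr (by omega)
    rw [hv]
    simp only
    rw [Nat.cast_div hk0 hkne]
    obtain ⟨m, hm⟩ : ∃ m, e' 0 = m + 1 := ⟨e' 0 - 1, by omega⟩
    rw [hm]
    have : (m + 1) - 1 = m := by omega
    rw [this, pow_succ]
    field_simp
  · rw [if_neg h]
    refine Finset.sum_eq_zero fun k hk => ?_
    rw [if_neg]
    intro hc
    exact h ⟨hc.2.2.1, hc.2.2.2⟩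

lemma coeff_prod_box (a : ℕ → ℤ) (e : Fin 2 →₀ ℕ) :
    coeff e (∏ p ∈ Finset.Icc 1 (e 1) ×ˢ Finset.Icc 1 (e 0), factor a p)
      = coeff e (expMv (rhsSeries a)) := by
  classical
  have hfac : ∀ p ∈ Finset.Icc 1 (e 1) ×ˢ Finset.Icc 1 (e 0),
      factor a p = expMv ((((p.2 : ℤ) * a p.1 : ℤ) : ℚ) • logOS (xp p)) := by
    intro p hp
    rw [Finset.mem_product, Finset.mem_Icc, Finset.mem_Icc] at hp
    exact factor_eq_expMv a p ⟨hp.1.1, hp.2.1⟩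
  rw [Finset.prod_congr rfl hfac,
    ← expMv_sum _ _ (fun p _ => constantCoeff_zsmul_logOS _ _)]
  exact expMv_congr fun u hu => coeff_sum_logOS a e u hu


theorem stmt6 (a : ℕ → ℤ) :
    ∃ P : MvPowerSeries (Fin 2) ℚ,
      (∀ e : Fin 2 →₀ ℕ,
        ∀ᶠ s : Finset (ℕ × ℕ) in Filter.atTop,
          MvPowerSeries.coeff e (∏ p ∈ s, factor a p) = MvPowerSeries.coeff e P) ∧
      P = expMv (rhsSeries a) := by
  classical
  refine ⟨expMv (rhsSeries a), fun e => ?_, rfl⟩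
  rw [Filter.eventually_atTop]
  refine ⟨Finset.Icc 1 (e 1) ×ˢ Finset.Icc 1 (e 0), fun s hs => ?_⟩
  set box := Finset.Icc 1 (e 1) ×ˢ Finset.Icc 1 (e 0) with hbox
  have hsplit : ∏ p ∈ s, factor a p = (∏ p ∈ box, factor a p) * ∏ p ∈ s \ box, factor a p := by
    rw [mul_comm]
    exact (Finset.prod_sdiff hs).symm
  have hcond : ∀ p ∈ s \ box, e 0 < p.2 ∨ e 1 < p.1 ∨ ¬(1 ≤ p.1 ∧ 1 ≤ p.2) := by
    intro p hp
    rw [Finset.mem_sdiff, hbox, Finset.mem_product, Finset.mem_Icc, Finset.mem_Icc] at hp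
    by_cases hv : 1 ≤ p.1 ∧ 1 ≤ p.2
    · have := hp.2
      push_neg at this
      rcases Nat.lt_or_ge (e 1) p.1 with h | h
      · exact Or.inr (Or.inl h)
      · left
        have := this ⟨hv.1, h⟩
        omega
    · exact Or.inr (Or.inr hv)
  rw [hsplit, coeff_mul_prod_outside a e _ hcond _, coeff_prod_box]

end
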